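/- Let S_1, ..., S_{N+1} be exchangeable (in particular, i.i.d.) real-valued random variables and let α ∈ (0,1). Let k = ⌈(1−α)(N+1)⌉ and let Q be the k-th smallest value among S_1, ..., S_N when k ≤ N, and Q = +∞ otherwise. Then P[ S_{N+1} ≤ Q ] ≥ 1 − α. -/

import Mathlib

open MeasureTheory
open Finset
open scoped ENNReal NNReal

private lemma sort_card_lt_le {m : ℕ} (f : Fin m → ℝ) (p : Fin m) :
    (univ.filter fun i => f i < f (Tuple.sort f p)).card ≤ (p : ℕ) := by
  have hmono := Tuple.monotone_sort f
  calc (univ.filter fun i => f i < f (Tuple.sort f p)).card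
      ≤ (Finset.Iio p).card := by
        apply Finset.card_le_card_of_injOn (fun i => (Tuple.sort f).symm i)
        · intro i hi
          simp only [Finset.mem_coe, mem_filter, mem_univ, true_and] at hi
          simp only [Finset.mem_coe, Finset.mem_Iio]
          by_contra hle
          push_neg at hle
          have := hmono hle
          simp only [Function.comp] at this
          rw [Equiv.apply_symm_apply] at this
          exact absurd hi (not_lt.mpr this)
        · intro a _ b _ h
          exact (Tuple.sort f).symm.injective h
    _ = (p : ℕ) := by simp

/-- reverse direction: small strict-rank implies below the k-th smallest -/
private lemma le_sort_of_card_le {m k : ℕ} (f : Fin m → ℝ) (x : ℝ)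
    (hk1 : 1 ≤ k) (hkm : k ≤ m)
    (h : (univ.filter fun i => f i < x).card ≤ k - 1) :
    x ≤ f (Tuple.sort f ⟨k - 1, by omega⟩) := by
  by_contra hlt
  push_neg at hlt
  have hmono := Tuple.monotone_sort f
  have hinj : k ≤ (univ.filter fun i => f i < x).card := by
    have := Finset.card_le_card_of_injOn
      (f := fun q : Fin k => Tuple.sort f ⟨(q : ℕ), lt_of_lt_of_le q.2 hkm⟩)
      (s := (univ : Finset (Fin k)))
      (t := univ.filter fun i => f i < x)
      (by
        intro q _
        simp only [Finset.mem_coe, mem_filter, mem_univ, true_and]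
        have hle : (⟨(q : ℕ), lt_of_lt_of_le q.2 hkm⟩ : Fin m) ≤ ⟨k - 1, by omega⟩ := by
          simp [Fin.le_def]; omega
        have := hmono hle
        simp only [Function.comp] at this
        exact lt_of_le_of_lt this hlt)
      (by
        intro a _ b _ hab
        have := (Tuple.sort f).injective hab
        simp only [Fin.mk.injEq] at this
        exact Fin.val_injective this)
    simpa using this
  omega

/-- at least `k` indices have strict-rank at most `k-1` -/
private lemma count_small_rank {m k : ℕ} (f : Fin m → ℝ) (hk1 : 1 ≤ k) (hkm : k ≤ m) :
    k ≤ (univ.filter fun j => (univ.filter fun i => f i < f j).card ≤ k - 1).card := by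
  have := Finset.card_le_card_of_injOn
    (f := fun q : Fin k => Tuple.sort f ⟨(q : ℕ), lt_of_lt_of_le q.2 hkm⟩)
    (s := (univ : Finset (Fin k)))
    (t := univ.filter fun j => (univ.filter fun i => f i < f j).card ≤ k - 1)
    (by
      intro q _
      simp only [Finset.mem_coe, mem_filter, mem_univ, true_and]
      have := sort_card_lt_le f ⟨(q : ℕ), lt_of_lt_of_le q.2 hkm⟩
      simp only at this
      have hq : (q : ℕ) < k := q.2
      omega)
    (by
      intro a _ b _ hab
      have := (Tuple.sort f).injective hab
      simp only [Fin.mk.injEq] at this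
      exact Fin.val_injective this)
  simpa using this


/-- The `k`-th smallest value (1-indexed) among `f 0, …, f (n-1)`. -/
noncomputable def kthSmallest {n : ℕ} (f : Fin n → ℝ) (k : ℕ) (hk : 1 ≤ k) (hkn : k ≤ n) : ℝ :=
  f (Tuple.sort f ⟨k - 1, by omega⟩)

/-- **Calibration quantile lemma for split conformal prediction (lower bound).**
Let `S₁, …, S_{N+1}` be exchangeable real-valued random variables, `α ∈ (0,1)`,
`k = ⌈(1-α)(N+1)⌉`, and let `Q` be the `k`-th smallest value among `S₁, …, S_N`
when `k ≤ N`, and `Q = +∞` otherwise.  Then `P[S_{N+1} ≤ Q] ≥ 1 - α`. -/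
theorem conformal_calibration_quantile_lower
    {Ω : Type*} [MeasurableSpace Ω] (ℙ : Measure Ω) [IsProbabilityMeasure ℙ]
    (N : ℕ)
    (S : Fin (N + 1) → Ω → ℝ)
    (hSmeas : ∀ i, Measurable (S i))
    (hexch : ∀ σ : Equiv.Perm (Fin (N + 1)),
      Measure.map (fun ω => fun i => S (σ i) ω) ℙ =
        Measure.map (fun ω => fun i => S i ω) ℙ)
    (α : ℝ) (hα : α ∈ Set.Ioo (0 : ℝ) 1)
    (k : ℕ) (hk : (k : ℤ) = ⌈(1 - α) * (N + 1)⌉)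
    (Q : Ω → EReal)
    (hQ : ∀ ω, Q ω =
      if h : 1 ≤ k ∧ k ≤ N then
        ((kthSmallest (fun i : Fin N => S i.castSucc ω) k h.1 h.2 : ℝ) : EReal)
      else (⊤ : EReal)) :
    1 - α ≤ (ℙ {ω | ((S (Fin.last N) ω : ℝ) : EReal) ≤ Q ω}).toReal := by
  obtain ⟨hα0, hα1⟩ := hα
  set E : Set Ω := {ω | ((S (Fin.last N) ω : ℝ) : EReal) ≤ Q ω} with hE
  have hNpos : (0 : ℝ) < (N : ℝ) + 1 := by positivity
  have hk1 : 1 ≤ k := by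
    have h0 : (0 : ℝ) < (1 - α) * ((N : ℝ) + 1) := by
      apply mul_pos (by linarith) hNpos
    have : (0 : ℤ) < (k : ℤ) := by
      rw [hk]; exact Int.ceil_pos.mpr (by linarith)
    omega
  have hkle : (1 - α) * ((N : ℝ) + 1) ≤ (k : ℝ) := by
    have := Int.le_ceil ((1 - α) * ((N : ℝ) + 1))
    rw [← hk] at this
    push_cast at this ⊢
    linarith
  by_cases hkN : k ≤ N
  · -- main case
    set A : Fin (N + 1) → Set Ω := fun j =>
      {ω | (univ.filter fun i => S i ω < S j ω).card ≤ k - 1} with hA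
    have hAmeas : ∀ j, MeasurableSet (A j) := by
      intro j
      have hcard : Measurable (fun ω => (univ.filter fun i => S i ω < S j ω).card) := by
        have : (fun ω => (univ.filter fun i => S i ω < S j ω).card) =
            fun ω => ∑ i, if S i ω < S j ω then 1 else 0 := by
          funext ω; rw [Finset.card_filter]
        rw [this]
        apply Finset.measurable_sum
        intro i _
        exact Measurable.ite (measurableSet_lt (hSmeas i) (hSmeas j))
          measurable_const measurable_const
      exact hcard ((Set.to_countable {n : ℕ | n ≤ k - 1}).measurableSet)
    -- B : set of vectors
    set B : Set (Fin (N + 1) → ℝ) :=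
      {v | (univ.filter fun i => v i < v (Fin.last N)).card ≤ k - 1} with hB
    have hBmeas : MeasurableSet B := by
      have hcard : Measurable (fun v : Fin (N + 1) → ℝ =>
          (univ.filter fun i => v i < v (Fin.last N)).card) := by
        have : (fun v : Fin (N + 1) → ℝ =>
            (univ.filter fun i => v i < v (Fin.last N)).card) =
            fun v => ∑ i, if v i < v (Fin.last N) then 1 else 0 := by
          funext v; rw [Finset.card_filter]
        rw [this]
        apply Finset.measurable_sum
        intro i _
        exact Measurable.ite (measurableSet_lt (measurable_pi_apply i)
          (measurable_pi_apply _)) measurable_const measurable_const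
      exact hcard ((Set.to_countable {n : ℕ | n ≤ k - 1}).measurableSet)
    -- each A j has the same measure as A (last)
    have hAeq : ∀ j, ℙ (A j) = ℙ (A (Fin.last N)) := by
      intro j
      set σ : Equiv.Perm (Fin (N + 1)) := Equiv.swap j (Fin.last N) with hσ
      have hmeasσ : Measurable (fun ω => fun i => S (σ i) ω) :=
        measurable_pi_lambda _ (fun i => hSmeas (σ i))
      have hmeas1 : Measurable (fun ω => fun i => S i ω) :=
        measurable_pi_lambda _ (fun i => hSmeas i)
      have hpre : (fun ω => fun i => S (σ i) ω) ⁻¹' B = A j := by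
        ext ω
        simp only [Set.mem_preimage, hB, Set.mem_setOf_eq, hA]
        have hlast : σ (Fin.last N) = j := Equiv.swap_apply_right _ _
        have hcardeq : (univ.filter fun i => S (σ i) ω < S (σ (Fin.last N)) ω).card =
            (univ.filter fun i => S i ω < S j ω).card := by
          apply Finset.card_nbij' (i := fun i => σ i) (j := fun i => σ.symm i)
          · intro a ha
            simp only [Finset.mem_coe, mem_filter, mem_univ, true_and] at ha ⊢
            rwa [hlast] at ha
          · intro a ha
            simp only [Finset.mem_coe, mem_filter, mem_univ, true_and] at ha ⊢
            simpa [hlast] using ha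
          · intro a _; simp
          · intro a _; simp
        rw [hcardeq]
      have hpre2 : (fun ω => fun i => S i ω) ⁻¹' B = A (Fin.last N) := by
        ext ω
        simp only [Set.mem_preimage, hB, Set.mem_setOf_eq, hA]
      calc ℙ (A j) = Measure.map (fun ω => fun i => S (σ i) ω) ℙ B := by
            rw [Measure.map_apply hmeasσ hBmeas, hpre]
        _ = Measure.map (fun ω => fun i => S i ω) ℙ B := by rw [hexch σ]
        _ = ℙ (A (Fin.last N)) := by rw [Measure.map_apply hmeas1 hBmeas, hpre2]
    -- sum bound
    have hsum : (k : ℝ≥0∞) ≤ ∑ j : Fin (N + 1), ℙ (A j) := by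
      have h1 : ∀ j, ℙ (A j) = ∫⁻ ω, (A j).indicator (1 : Ω → ℝ≥0∞) ω ∂ℙ := by
        intro j
        rw [lintegral_indicator_one (hAmeas j)]
      calc (k : ℝ≥0∞) = ∫⁻ _, (k : ℝ≥0∞) ∂ℙ := by simp
        _ ≤ ∫⁻ ω, ∑ j : Fin (N + 1), (A j).indicator (1 : Ω → ℝ≥0∞) ω ∂ℙ := by
            apply lintegral_mono
            intro ω
            show (k : ℝ≥0∞) ≤ ∑ j : Fin (N + 1), (A j).indicator (1 : Ω → ℝ≥0∞) ω
            have hcount := count_small_rank (fun j => S j ω) hk1 (by omega)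
            have hsum_ind : ∑ j : Fin (N + 1), (A j).indicator (1 : Ω → ℝ≥0∞) ω =
                ((univ.filter fun j : Fin (N + 1) => ω ∈ A j).card : ℝ≥0∞) := by
              rw [Finset.card_filter]
              push_cast
              apply Finset.sum_congr rfl
              intro j _
              by_cases hj : ω ∈ A j <;> simp [hj, Set.indicator]
            rw [hsum_ind]
            exact Nat.cast_le.mpr (by convert hcount using 2; exact Finset.filter_congr (fun j _ => Iff.rfl))
        _ = ∑ j : Fin (N + 1), ℙ (A j) := by
            rw [lintegral_finset_sum]
            · exact Finset.sum_congr rfl (fun j _ => (h1 j).symm)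
            · intro j _
              exact measurable_const.indicator (hAmeas j)
    have hsum2 : (k : ℝ≥0∞) ≤ ((N : ℝ≥0∞) + 1) * ℙ (A (Fin.last N)) := by
      calc (k : ℝ≥0∞) ≤ ∑ j : Fin (N + 1), ℙ (A j) := hsum
        _ = ∑ _j : Fin (N + 1), ℙ (A (Fin.last N)) := Finset.sum_congr rfl (fun j _ => hAeq j)
        _ = ((N : ℝ≥0∞) + 1) * ℙ (A (Fin.last N)) := by
            rw [Finset.sum_const, Finset.card_univ, Fintype.card_fin]
            simp [nsmul_eq_mul]
    -- A last ⊆ E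
    have hsub : A (Fin.last N) ⊆ E := by
      intro ω hω
      simp only [hA, Set.mem_setOf_eq] at hω
      have hcard2 : (univ.filter fun i : Fin N => S i.castSucc ω < S (Fin.last N) ω).card ≤
          k - 1 := by
        refine le_trans ?_ hω
        apply Finset.card_le_card_of_injOn (fun i => i.castSucc)
        · intro a ha
          simp only [Finset.mem_coe, mem_filter, mem_univ, true_and] at ha ⊢
          exact ha
        · intro a _ b _ h
          exact Fin.castSucc_injective _ h
      have hle := le_sort_of_card_le (fun i : Fin N => S i.castSucc ω)
        (S (Fin.last N) ω) hk1 hkN hcard2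
      simp only [hE, Set.mem_setOf_eq]
      rw [hQ ω, dif_pos ⟨hk1, hkN⟩]
      exact_mod_cast hle
    have hfinal : (k : ℝ≥0∞) ≤ ((N : ℝ≥0∞) + 1) * ℙ E :=
      le_trans hsum2 (mul_le_mul_right (measure_mono hsub) _)
    -- pass to reals
    have hEfin : ℙ E ≠ ⊤ := measure_ne_top ℙ E
    have hreal : (k : ℝ) ≤ ((N : ℝ) + 1) * (ℙ E).toReal := by
      have h1 : ((k : ℝ≥0∞)).toReal ≤ (((N : ℝ≥0∞) + 1) * ℙ E).toReal := by
        apply ENNReal.toReal_mono _ hfinal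
        exact ENNReal.mul_ne_top (by simp) hEfin
      rw [ENNReal.toReal_mul, ENNReal.toReal_add (by simp) (by simp)] at h1
      simpa using h1
    rw [← mul_le_mul_iff_of_pos_right hNpos]
    calc (1 - α) * ((N : ℝ) + 1) ≤ (k : ℝ) := hkle
      _ ≤ ((N : ℝ) + 1) * (ℙ E).toReal := hreal
      _ = (ℙ E).toReal * ((N : ℝ) + 1) := by ring
  · -- k > N : Q = ⊤, event is everything
    have hEuniv : E = Set.univ := by
      ext ω
      simp only [hE, Set.mem_setOf_eq, Set.mem_univ, iff_true]
      rw [hQ ω, dif_neg (by omega)]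
      exact le_top
    rw [hEuniv]
    simp only [measure_univ, ENNReal.toReal_one]
    linarith
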